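/- Let E, A ∈ ℂ^{n×n}, B ∈ ℂ^{n×m}, C ∈ ℂ^{m×n}, D ∈ ℂ^{m×m}, and suppose X ∈ ℂ^{n×n} is a solution of the discrete-time scattering KYP inequality (d-sKYP). Then for every z ∈ ℂ with |z| > 1 such that zE − A is invertible, the matrix I_m − T(z)^H T(z) is positive semidefinite, where T(z) := C (zE − A)^{-1} B + D is the transfer function of the system. -/

import Mathlib

open Matrix
open scoped ComplexOrder

lemma psd_smul_aux {k : ℕ} {M : Matrix (Fin k) (Fin k) ℂ} (hM : M.PosSemidef) (c : ℝ) (hc : 0 ≤ c) :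
    ((c:ℂ) • M).PosSemidef := by
  refine .of_dotProduct_mulVec_nonneg ?_ ?_
  · unfold Matrix.IsHermitian
    rw [conjTranspose_smul, hM.1.eq]
    norm_num
  · intro v
    rw [Matrix.smul_mulVec, dotProduct_smul, smul_eq_mul]
    exact mul_nonneg (by exact_mod_cast Complex.zero_le_real.2 hc) (hM.dotProduct_mulVec_nonneg v)


/-- If the discrete-time scattering KYP inequality (d-sKYP) is solvable, then the
transfer function `T(z) = C (zE - A)⁻¹ B + D` satisfies `I - T(z)ᴴ T(z) ≥ 0` for all
`|z| > 1` at which `zE - A` is invertible (bounded realness). -/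
theorem dsKYP_implies_bounded_real
    (n m : ℕ)
    (E A X : Matrix (Fin n) (Fin n) ℂ)
    (B : Matrix (Fin n) (Fin m) ℂ)
    (C : Matrix (Fin m) (Fin n) ℂ)
    (D : Matrix (Fin m) (Fin m) ℂ)
    (hX : X.PosSemidef)
    (hKYP : (Matrix.fromBlocks
        (-(Aᴴ * X * A) + Eᴴ * X * E - Cᴴ * C) (-(Aᴴ * X * B) - Cᴴ * D)
        (-(Dᴴ * C) - Bᴴ * X * A) (1 - Dᴴ * D - Bᴴ * X * B)).PosSemidef) :
    ∀ z : ℂ, 1 < ‖z‖ → IsUnit (z • E - A) →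
      ((1 : Matrix (Fin m) (Fin m) ℂ)
        - (C * (z • E - A)⁻¹ * B + D)ᴴ * (C * (z • E - A)⁻¹ * B + D)).PosSemidef := by
  intro z hz hu
  rw [Matrix.mul_assoc C (z • E - A)⁻¹ B]
  set G : Matrix (Fin n) (Fin m) ℂ := (z • E - A)⁻¹ * B with hG
  set T : Matrix (Fin m) (Fin m) ℂ := C * G + D with hT
  set F : Matrix (Fin n) (Fin m) ℂ := E * G with hF
  -- key relation
  have hrel : A * G + B = z • F := by
    have h1 : (z • E - A) * G = B := by
      rw [hG, ← Matrix.mul_assoc, Matrix.mul_nonsing_inv _ ((Matrix.isUnit_iff_isUnit_det _).mp hu), Matrix.one_mul]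
    have h2 : (z • E - A) * G = z • (E * G) - A * G := by
      rw [Matrix.sub_mul, Matrix.smul_mul]
    rw [hF, ← h1, h2]
    abel
  -- the conjugated KYP matrix
  set P : Matrix (Fin n ⊕ Fin m) (Fin m) ℂ := fromRows G 1 with hP
  have hPSD1 : (Pᴴ * (Matrix.fromBlocks
        (-(Aᴴ * X * A) + Eᴴ * X * E - Cᴴ * C) (-(Aᴴ * X * B) - Cᴴ * D)
        (-(Dᴴ * C) - Bᴴ * X * A) (1 - Dᴴ * D - Bᴴ * X * B)) * P).PosSemidef :=
    hKYP.conjTranspose_mul_mul_same P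
  have hS : Pᴴ * (Matrix.fromBlocks
        (-(Aᴴ * X * A) + Eᴴ * X * E - Cᴴ * C) (-(Aᴴ * X * B) - Cᴴ * D)
        (-(Dᴴ * C) - Bᴴ * X * A) (1 - Dᴴ * D - Bᴴ * X * B)) * P
      = Fᴴ * X * F - (A * G + B)ᴴ * X * (A * G + B) - Tᴴ * T + 1 := by
    rw [hP, conjTranspose_fromRows_eq_fromCols_conjTranspose, Matrix.mul_assoc,
      fromBlocks_mul_fromRows, fromCols_mul_fromRows]
    simp only [hT, hF, conjTranspose_add, conjTranspose_mul, conjTranspose_one,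
      sub_eq_add_neg, Matrix.add_mul, Matrix.mul_add, Matrix.mul_one, Matrix.one_mul,
      Matrix.neg_mul, Matrix.mul_neg, neg_add, neg_neg, Matrix.mul_assoc]
    abel
  have hsq : (A * G + B)ᴴ * X * (A * G + B) = (star z * z) • (Fᴴ * X * F) := by
    rw [hrel, conjTranspose_smul, Matrix.smul_mul, Matrix.smul_mul, Matrix.mul_smul, smul_smul]
  have habs : star z * z = (Complex.normSq z : ℂ) := by
    simp [Complex.star_def, Complex.normSq_eq_conj_mul_self]
  have key : (1 : Matrix (Fin m) (Fin m) ℂ) - Tᴴ * T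
      = (Pᴴ * (Matrix.fromBlocks
        (-(Aᴴ * X * A) + Eᴴ * X * E - Cᴴ * C) (-(Aᴴ * X * B) - Cᴴ * D)
        (-(Dᴴ * C) - Bᴴ * X * A) (1 - Dᴴ * D - Bᴴ * X * B)) * P)
        + ((Complex.normSq z - 1 : ℝ) : ℂ) • (Fᴴ * X * F) := by
    rw [hS, hsq, habs]
    push_cast
    rw [sub_smul, one_smul]
    abel
  have hXF : (Fᴴ * X * F).PosSemidef := hX.conjTranspose_mul_mul_same F
  have hc : (0:ℝ) ≤ Complex.normSq z - 1 := by
    have h2 := Complex.sq_norm z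
    nlinarith
  have := hPSD1.add (psd_smul_aux hXF _ hc)
  rw [hT] at key
  rw [key]
  exact this
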